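/- Let L be a countable locally finite CW complex possessing the connected pairs property with respect to Polish spaces, and let X be a compactum (compact Hausdorff space). Suppose that each pair K ⊆ C of metrizable compacta with e-dim C ≤ [L] that is [L]-connected with respect to Polish spaces is X-connected. Then for every metrizable space Y with e-dim Y ≤ [L] which is an absolute extensor in dimension [L] for metrizable compacta, we have Y ∈ AE(X). -/

import Mathlib

open Set TopologicalSpace Topology

/-- `IsAE X W`: `W` is an absolute extensor of `X`, i.e. every continuous map from a
closed subspace of `X` into `W` extends continuously over `X`. -/
def IsAE (X : Type*) [TopologicalSpace X] (W : Type*) [TopologicalSpace W] : Prop :=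
  ∀ A : Set X, IsClosed A → ∀ f : C(A, W), ∃ g : C(X, W), ∀ a : A, g a = f a

/-- `edimLE X L`: the extension dimension of `X` is at most `[L]`, i.e. `L ∈ AE(X)`. -/
def edimLE (X : Type*) [TopologicalSpace X] (L : Type*) [TopologicalSpace L] : Prop :=
  IsAE X L

/-- `W ∈ AE([L], 𝒫)`: `W` is an absolute extensor in dimension `[L]` for Polish spaces. -/
def AEPolish (L : Type*) [TopologicalSpace L] (W : Type*) [TopologicalSpace W] : Prop :=
  ∀ (Z : Type) [TopologicalSpace Z] [PolishSpace Z], edimLE Z L → IsAE Z W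

/-- The pair `V ⊆ U` is `X`-connected: every continuous map of a closed subspace of `X`
into `V` extends to a continuous map of `X` into `U`. -/
def XConnectedPair (X : Type*) [TopologicalSpace X] (U : Type*) [TopologicalSpace U]
    (V : Set U) : Prop :=
  ∀ A : Set X, IsClosed A → ∀ f : C(A, V), ∃ g : C(X, U), ∀ a : A, g a = (f a : U)

/-- The pair `V ⊆ U` is `[L]`-connected with respect to Polish spaces. -/
def LConnPolish (L : Type*) [TopologicalSpace L] (U : Type*) [TopologicalSpace U]
    (V : Set U) : Prop :=
  ∀ (Z : Type) [TopologicalSpace Z] [PolishSpace Z], edimLE Z L → XConnectedPair Z U V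

/-- `L` possesses the connected pairs property with respect to Polish spaces: every
metrizable compactum `K` with `e-dim K ≤ [L]` embeds in a metrizable compactum `C` with
`e-dim C ≤ [L]` such that the pair `K ⊆ C` is `[L]`-connected with respect to Polish spaces. -/
def ConnectedPairsProperty (L : Type) [TopologicalSpace L] : Prop :=
  ∀ (K : Type) [TopologicalSpace K] [CompactSpace K] [MetrizableSpace K],
    edimLE K L →
    ∃ C : TopCat.{0}, CompactSpace C ∧ MetrizableSpace C ∧ edimLE C L ∧
      ∃ e : K → C, IsEmbedding e ∧ LConnPolish L C (Set.range e)

theorem statement4 (L : Type) [TopologicalSpace L] (hL : ConnectedPairsProperty L)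
    (X : Type) [TopologicalSpace X] [CompactSpace X] [T2Space X]
    (hpairs : ∀ (C : Type) [TopologicalSpace C] [CompactSpace C] [MetrizableSpace C]
      (K : Set C), IsClosed K → edimLE C L → LConnPolish L C K → XConnectedPair X C K)
    (Y : Type) [TopologicalSpace Y] [MetrizableSpace Y] (hY : edimLE Y L)
    (hYAE : ∀ (K : Type) [TopologicalSpace K] [CompactSpace K] [MetrizableSpace K],
      edimLE K L → IsAE K Y) :
    IsAE X Y := by
  intro A hA f
  haveI : CompactSpace A := isCompact_iff_compactSpace.mp hA.isCompact
  set K : Set Y := Set.range f with hKdef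
  have hKcomp : IsCompact K := isCompact_range f.continuous
  have hKclosed : IsClosed K := hKcomp.isClosed
  haveI : CompactSpace K := isCompact_iff_compactSpace.mp hKcomp
  -- closed subspaces inherit extension dimension
  have hedimK : edimLE K L := by
    intro B hB phi
    have hBY : IsClosed (Subtype.val '' B : Set Y) :=
      hKclosed.isClosedEmbedding_subtypeVal.isClosedMap _ hB
    have hsub : ∀ b' : (Subtype.val '' B : Set Y), b'.1 ∈ K := by
      rintro ⟨b, x, hxB, hx⟩; exact hx ▸ x.2
    have hmem : ∀ b' : (Subtype.val '' B : Set Y), (⟨b'.1, hsub b'⟩ : K) ∈ B := by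
      rintro ⟨b, x, hxB, hx⟩
      exact (Subtype.ext hx : x = ⟨b, _⟩) ▸ hxB
    let phi' : C((Subtype.val '' B : Set Y), L) :=
      ⟨fun b' => phi ⟨⟨b'.1, hsub b'⟩, hmem b'⟩,
        phi.continuous.comp ((continuous_subtype_val.subtype_mk _).subtype_mk _)⟩
    obtain ⟨g, hg⟩ := hY _ hBY phi'
    refine ⟨⟨fun k => g k.1, g.continuous.comp continuous_subtype_val⟩, fun b => ?_⟩
    have := hg ⟨b.1.1, ⟨b.1, b.2, rfl⟩⟩
    simp only [ContinuousMap.coe_mk] at this ⊢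
    rw [this]
    exact congrArg phi (Subtype.ext (Subtype.ext rfl))
  obtain ⟨C, hCc, hCm, hedimC, e, he, hconn⟩ := hL K hedimK
  haveI := hCc; haveI := hCm
  haveI : T2Space C := letI := metrizableSpaceMetric C; inferInstance
  have hrc : IsClosed (Set.range e) := (isCompact_range he.continuous).isClosed
  have hXconn := hpairs C (Set.range e) hrc hedimC hconn
  let f' : C(A, (Set.range e : Set C)) :=
    ⟨fun a => ⟨e ⟨f a, ⟨a, rfl⟩⟩, Set.mem_range_self _⟩,
      (he.continuous.comp (f.continuous.subtype_mk _)).subtype_mk _⟩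
  obtain ⟨g, hg⟩ := hXconn A hA f'
  let ψ : K ≃ₜ (Set.range e : Set C) := he.toHomeomorph
  let r : C((Set.range e : Set C), Y) :=
    ⟨fun x => ((ψ.symm x : K) : Y), continuous_subtype_val.comp ψ.symm.continuous⟩
  obtain ⟨h, hh⟩ := hYAE C hedimC (Set.range e) hrc r
  refine ⟨h.comp g, fun a => ?_⟩
  have h1 : g a = (f' a : C) := hg a
  have h2 := hh ⟨(f' a : C), (f' a).2⟩
  simp only [ContinuousMap.comp_apply]
  rw [h1, h2]
  show ((ψ.symm ⟨(f' a : C), (f' a).2⟩ : K) : Y) = f a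
  have : (⟨(f' a : C), (f' a).2⟩ : (Set.range e : Set C)) = ψ ⟨f a, ⟨a, rfl⟩⟩ :=
    Subtype.ext rfl
  rw [this, ψ.symm_apply_apply]
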